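/- arXiv:0809.1840 — 3 statements merged into one kernel-verified Lean document; each statement's English description precedes it below -/
import Mathlib

section
/- For the Leipnik unit deviance d(y;μ) = log((1 − 2yμ + μ²)/(1 − y²)) on (−1,1) × (−1,1): d(y,y) = 0 for all y ∈ (−1,1), ∂²_{yy} d(μ;μ) = 2/(1−μ²), and ∂³_{yyy} d(μ;μ) = 12μ/(1−μ²)². -/
/-- For the Leipnik unit deviance
`d(y;μ) = log((1 − 2yμ + μ²)/(1 − y²))` on `(−1,1) × (−1,1)`: `d(y,y)=0`,
`∂²_{yy} d(μ;μ) = 2/(1−μ²)`, `∂³_{yyy} d(μ;μ) = 12μ/(1−μ²)²`. -/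
theorem leipnik_deviance_props :
    (∀ y : ℝ, y ∈ Set.Ioo (-1 : ℝ) 1 →
      Real.log ((1 - 2 * y * y + y ^ 2) / (1 - y ^ 2)) = 0) ∧
    (∀ μ : ℝ, μ ∈ Set.Ioo (-1 : ℝ) 1 →
      iteratedDeriv 2
        (fun y : ℝ => Real.log ((1 - 2 * y * μ + μ ^ 2) / (1 - y ^ 2))) μ
        = 2 / (1 - μ ^ 2) ∧
      iteratedDeriv 3
        (fun y : ℝ => Real.log ((1 - 2 * y * μ + μ ^ 2) / (1 - y ^ 2))) μ
        = 12 * μ / (1 - μ ^ 2) ^ 2) := by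
  constructor
  · rintro y ⟨hy1, hy2⟩
    have hd : (1 : ℝ) - y ^ 2 > 0 := by nlinarith
    rw [show (1 - 2 * y * y + y ^ 2) = 1 - y ^ 2 by ring, div_self (ne_of_gt hd),
      Real.log_one]
  · rintro μ hμ
    have hs : IsOpen (Set.Ioo (-1 : ℝ) 1) := isOpen_Ioo
    set f : ℝ → ℝ := fun y : ℝ => Real.log ((1 - 2 * y * μ + μ ^ 2) / (1 - y ^ 2)) with hf
    set g1 : ℝ → ℝ := fun y => -(2 * μ) / (1 - 2 * y * μ + μ ^ 2) + 2 * y / (1 - y ^ 2)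
      with hg1
    set g2 : ℝ → ℝ := fun y => -(4 * μ ^ 2) / (1 - 2 * y * μ + μ ^ 2) ^ 2
      + (2 + 2 * y ^ 2) / (1 - y ^ 2) ^ 2 with hg2
    set g3 : ℝ → ℝ := fun y => -(16 * μ ^ 3) / (1 - 2 * y * μ + μ ^ 2) ^ 3
      + (12 * y + 4 * y ^ 3) / (1 - y ^ 2) ^ 3 with hg3
    have hden : ∀ y ∈ Set.Ioo (-1 : ℝ) 1, (0:ℝ) < 1 - y ^ 2 := by
      rintro y ⟨hy1, hy2⟩; nlinarith
    have hnum : ∀ y ∈ Set.Ioo (-1 : ℝ) 1, (0:ℝ) < 1 - 2 * y * μ + μ ^ 2 := by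
      rintro y ⟨hy1, hy2⟩; nlinarith [sq_nonneg (y - μ)]
    have Hnum : ∀ y : ℝ, HasDerivAt (fun y => 1 - 2 * y * μ + μ ^ 2) (-(2 * μ)) y := by
      intro y
      have := ((((hasDerivAt_id y).const_mul 2).mul_const μ).const_sub 1).add_const (μ ^ 2)
      refine this.congr_deriv ?_
      ring
    have Hden : ∀ y : ℝ, HasDerivAt (fun y : ℝ => 1 - y ^ 2) (-(2 * y)) y := by
      intro y
      have := (hasDerivAt_pow 2 y).const_sub 1
      refine this.congr_deriv ?_
      push_cast
      ring
    -- first derivative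
    have H1 : ∀ y ∈ Set.Ioo (-1 : ℝ) 1, HasDerivAt f (g1 y) y := by
      intro y hy
      have h1 := ((Hnum y).log (hnum y hy).ne').sub ((Hden y).log (hden y hy).ne')
      have heq : (fun z => Real.log (1 - 2 * z * μ + μ ^ 2) - Real.log (1 - z ^ 2))
          =ᶠ[nhds y] f := by
        refine Filter.eventuallyEq_of_mem (hs.mem_nhds hy) (fun z hz => ?_)
        exact (Real.log_div (hnum z hz).ne' (hden z hz).ne').symm
      have h2 := h1.congr_of_eventuallyEq heq.symm
      refine h2.congr_deriv ?_
      rw [hg1]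
      ring
    have H2 : ∀ y ∈ Set.Ioo (-1 : ℝ) 1, HasDerivAt g1 (g2 y) y := by
      intro y hy
      have hn := (hnum y hy).ne'
      have hd := (hden y hy).ne'
      have t1 := (hasDerivAt_const y (-(2 * μ))).div (Hnum y) hn
      have hnum2 : HasDerivAt (fun y : ℝ => 2 * y) 2 y := by
        simpa using (hasDerivAt_id y).const_mul 2
      have t2 := hnum2.div (Hden y) hd
      have h := t1.add t2
      refine h.congr_deriv ?_
      rw [hg2]
      ring
    have H3 : ∀ y ∈ Set.Ioo (-1 : ℝ) 1, HasDerivAt g2 (g3 y) y := by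
      intro y hy
      have hn := (hnum y hy).ne'
      have hd := (hden y hy).ne'
      have t1 := (hasDerivAt_const y (-(4 * μ ^ 2))).div ((Hnum y).pow 2) (pow_ne_zero 2 hn)
      have hnum2 : HasDerivAt (fun y : ℝ => 2 + 2 * y ^ 2) (4 * y) y := by
        have := ((hasDerivAt_pow 2 y).const_mul 2).const_add 2
        refine this.congr_deriv ?_
        push_cast
        ring
      have t2 := hnum2.div ((Hden y).pow 2) (pow_ne_zero 2 hd)
      have h := t1.add t2
      refine h.congr_deriv ?_
      rw [hg3]
      simp only [Pi.pow_apply]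
      have hn2 : ((1 - 2 * y * μ + μ ^ 2) ^ 2) ≠ 0 := pow_ne_zero 2 hn
      have hd2 : ((1 - y ^ 2) ^ 2) ≠ 0 := pow_ne_zero 2 hd
      field_simp
      ring
    have E1 : deriv f =ᶠ[nhds μ] g1 :=
      Filter.eventuallyEq_of_mem (hs.mem_nhds hμ) (fun y hy => (H1 y hy).deriv)
    have E2 : deriv g1 =ᶠ[nhds μ] g2 :=
      Filter.eventuallyEq_of_mem (hs.mem_nhds hμ) (fun y hy => (H2 y hy).deriv)
    have hdμ : (0:ℝ) < 1 - μ ^ 2 := hden μ hμ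
    have hNμ : (1 - 2 * μ * μ + μ ^ 2) = 1 - μ ^ 2 := by ring
    constructor
    · have h0 : iteratedDeriv 2 f μ = deriv (deriv f) μ := by
        simp [iteratedDeriv_succ, iteratedDeriv_zero]
      rw [h0, E1.deriv_eq, (H2 μ hμ).deriv]
      show -(4 * μ ^ 2) / (1 - 2 * μ * μ + μ ^ 2) ^ 2
        + (2 + 2 * μ ^ 2) / (1 - μ ^ 2) ^ 2 = 2 / (1 - μ ^ 2)
      rw [hNμ]
      field_simp
      ring
    · have h0 : iteratedDeriv 3 f μ = deriv (deriv (deriv f)) μ := by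
        simp [iteratedDeriv_succ, iteratedDeriv_zero]
      rw [h0]
      have E12 : deriv (deriv f) =ᶠ[nhds μ] g2 := E1.deriv.trans E2
      rw [E12.deriv_eq, (H3 μ hμ).deriv]
      show -(16 * μ ^ 3) / (1 - 2 * μ * μ + μ ^ 2) ^ 3
        + (12 * μ + 4 * μ ^ 3) / (1 - μ ^ 2) ^ 3 = 12 * μ / (1 - μ ^ 2) ^ 2
      rw [hNμ]
      field_simp
      ring
end

section
/- For the transformed Leipnik unit deviance d(y;μ) = log(1 + (y−μ)²/(y(1−y))) on (0,1) × (0,1): d(y,y) = 0, d(y,μ) > 0 for y ≠ μ, ∂²_{yy} d(μ;μ) = 2/(μ(1−μ)), and ∂³_{yyy} d(μ;μ) = 6(2μ−1)/(μ(1−μ))². -/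
open Filter Set Topology

private noncomputable def L0 (μ y : ℝ) : ℝ :=
  Real.log ((1 - 2*μ)*y + μ^2) - Real.log y - Real.log (1 - y)

private noncomputable def L1 (μ y : ℝ) : ℝ :=
  (1 - 2*μ) / ((1 - 2*μ)*y + μ^2) - 1/y + 1/(1 - y)

private noncomputable def L2 (μ y : ℝ) : ℝ :=
  -((1 - 2*μ)^2 / ((1 - 2*μ)*y + μ^2)^2) + 1/y^2 + 1/(1 - y)^2

private noncomputable def L3 (μ y : ℝ) : ℝ :=
  2*(1 - 2*μ)^3 / ((1 - 2*μ)*y + μ^2)^3 - 2/y^3 + 2/(1 - y)^3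

private lemma key (μ y : ℝ) (hy : y ∈ Set.Ioo (0:ℝ) 1) :
    y ≠ 0 ∧ (1:ℝ) - y ≠ 0 ∧ (1 - 2*μ)*y + μ^2 ≠ 0 := by
  obtain ⟨hy0, hy1⟩ := hy
  have h1 : 0 < (1 - 2*μ)*y + μ^2 := by nlinarith [sq_nonneg (y - μ), mul_pos hy0 (by linarith : (0:ℝ) < 1 - y)]
  exact ⟨ne_of_gt hy0, by linarith, ne_of_gt h1⟩

private lemma hasDerivAt_L0 (μ y : ℝ) (hy : y ∈ Set.Ioo (0:ℝ) 1) :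
    HasDerivAt (L0 μ) (L1 μ y) y := by
  obtain ⟨hy0, h1y, hcy⟩ := key μ y hy
  have ha : HasDerivAt (fun y : ℝ => (1 - 2*μ)*y + μ^2) (1 - 2*μ) y := by
    simpa using ((hasDerivAt_id y).const_mul (1 - 2*μ)).add_const (μ^2)
  have hb : HasDerivAt (fun y : ℝ => 1 - y) (-1) y := by
    simpa using (hasDerivAt_id y).const_sub 1
  have H : HasDerivAt (L0 μ) _ y := ((ha.log hcy).sub (Real.hasDerivAt_log hy0)).sub (hb.log h1y)
  convert H using 1
  unfold L1
  field_simp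
  ring

private lemma hasDerivAt_L1 (μ y : ℝ) (hy : y ∈ Set.Ioo (0:ℝ) 1) :
    HasDerivAt (L1 μ) (L2 μ y) y := by
  obtain ⟨hy0, h1y, hcy⟩ := key μ y hy
  have ha : HasDerivAt (fun y : ℝ => (1 - 2*μ)*y + μ^2) (1 - 2*μ) y := by
    simpa using ((hasDerivAt_id y).const_mul (1 - 2*μ)).add_const (μ^2)
  have hb : HasDerivAt (fun y : ℝ => 1 - y) (-1) y := by
    simpa using (hasDerivAt_id y).const_sub 1
  have t1 := (hasDerivAt_const y (1 - 2*μ)).div ha hcy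
  have t2 := (hasDerivAt_const y (1:ℝ)).div (hasDerivAt_id y) hy0
  have t3 := (hasDerivAt_const y (1:ℝ)).div hb h1y
  have H : HasDerivAt (L1 μ) _ y := (t1.sub t2).add t3
  convert H using 1
  unfold L2
  simp only [id, Pi.pow_apply, Nat.cast_ofNat, Nat.reduceSub]
  field_simp
  ring

private lemma hasDerivAt_L2 (μ y : ℝ) (hy : y ∈ Set.Ioo (0:ℝ) 1) :
    HasDerivAt (L2 μ) (L3 μ y) y := by
  obtain ⟨hy0, h1y, hcy⟩ := key μ y hy
  have ha : HasDerivAt (fun y : ℝ => (1 - 2*μ)*y + μ^2) (1 - 2*μ) y := by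
    simpa using ((hasDerivAt_id y).const_mul (1 - 2*μ)).add_const (μ^2)
  have hb : HasDerivAt (fun y : ℝ => 1 - y) (-1) y := by
    simpa using (hasDerivAt_id y).const_sub 1
  have t1 := ((hasDerivAt_const y ((1 - 2*μ)^2)).div (ha.pow 2) (pow_ne_zero 2 hcy)).neg
  have t2 := (hasDerivAt_const y (1:ℝ)).div ((hasDerivAt_id y).pow 2) (pow_ne_zero 2 hy0)
  have t3 := (hasDerivAt_const y (1:ℝ)).div (hb.pow 2) (pow_ne_zero 2 h1y)
  have H : HasDerivAt (L2 μ) _ y := (t1.add t2).add t3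
  convert H using 1
  unfold L3
  simp only [id, Pi.pow_apply, Nat.cast_ofNat, Nat.reduceSub]
  field_simp
  ring

private lemma main_calc (μ : ℝ) (hμ : μ ∈ Set.Ioo (0:ℝ) 1) :
    iteratedDeriv 2 (fun y : ℝ => Real.log (1 + (y - μ) ^ 2 / (y * (1 - y)))) μ
        = 2 / (μ * (1 - μ)) ∧
    iteratedDeriv 3 (fun y : ℝ => Real.log (1 + (y - μ) ^ 2 / (y * (1 - y)))) μ
        = 6 * (2 * μ - 1) / (μ * (1 - μ)) ^ 2 := by
  obtain ⟨hμ0, hμ1⟩ := hμ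
  have hmem : Set.Ioo (0:ℝ) 1 ∈ 𝓝 μ := isOpen_Ioo.mem_nhds ⟨hμ0, hμ1⟩
  have hE0 : (fun y : ℝ => Real.log (1 + (y - μ) ^ 2 / (y * (1 - y)))) =ᶠ[𝓝 μ] L0 μ := by
    filter_upwards [hmem] with y hy
    obtain ⟨hy0, h1y, hcy⟩ := key μ y hy
    have hyy : y * (1 - y) ≠ 0 := mul_ne_zero hy0 h1y
    have heq : 1 + (y - μ) ^ 2 / (y * (1 - y)) = ((1 - 2*μ)*y + μ^2) / (y * (1 - y)) := by
      field_simp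
      ring
    rw [heq, Real.log_div hcy hyy, Real.log_mul hy0 h1y]
    unfold L0
    ring
  have hE1 : deriv (L0 μ) =ᶠ[𝓝 μ] L1 μ := by
    filter_upwards [hmem] with y hy using (hasDerivAt_L0 μ y hy).deriv
  have hE2 : deriv (L1 μ) =ᶠ[𝓝 μ] L2 μ := by
    filter_upwards [hmem] with y hy using (hasDerivAt_L1 μ y hy).deriv
  have hE3 : deriv (L2 μ) =ᶠ[𝓝 μ] L3 μ := by
    filter_upwards [hmem] with y hy using (hasDerivAt_L2 μ y hy).deriv
  have e1 : deriv (fun y : ℝ => Real.log (1 + (y - μ) ^ 2 / (y * (1 - y)))) =ᶠ[𝓝 μ] L1 μ :=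
    hE0.deriv.trans hE1
  have e2 : deriv (deriv (fun y : ℝ => Real.log (1 + (y - μ) ^ 2 / (y * (1 - y))))) =ᶠ[𝓝 μ] L2 μ :=
    e1.deriv.trans hE2
  have e3 : deriv (deriv (deriv (fun y : ℝ => Real.log (1 + (y - μ) ^ 2 / (y * (1 - y)))))) =ᶠ[𝓝 μ] L3 μ :=
    e2.deriv.trans hE3
  have hμ0' : μ ≠ 0 := ne_of_gt hμ0
  have hμ1' : (1:ℝ) - μ ≠ 0 := by linarith
  constructor
  · rw [show (2:ℕ) = 0+1+1 by rfl, iteratedDeriv_succ, iteratedDeriv_succ, iteratedDeriv_zero]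
    rw [e2.eq_of_nhds]
    unfold L2
    rw [show (1 - 2*μ)*μ + μ^2 = μ*(1-μ) by ring]
    field_simp
    ring
  · rw [show (3:ℕ) = 0+1+1+1 by rfl, iteratedDeriv_succ, iteratedDeriv_succ, iteratedDeriv_succ,
      iteratedDeriv_zero]
    rw [e3.eq_of_nhds]
    unfold L3
    rw [show (1 - 2*μ)*μ + μ^2 = μ*(1-μ) by ring]
    field_simp
    ring

/-- For the transformed Leipnik unit deviance
`d(y;μ) = log(1 + (y−μ)²/(y(1−y)))` on `(0,1) × (0,1)`: `d(y,y)=0`,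
`d(y,μ)>0` for `y ≠ μ`, `∂²_{yy} d(μ;μ) = 2/(μ(1−μ))`,
`∂³_{yyy} d(μ;μ) = 6(2μ−1)/(μ(1−μ))²`. -/
theorem transformed_leipnik_deviance_props :
    (∀ y : ℝ, y ∈ Set.Ioo (0 : ℝ) 1 →
      Real.log (1 + (y - y) ^ 2 / (y * (1 - y))) = 0) ∧
    (∀ y μ : ℝ, y ∈ Set.Ioo (0 : ℝ) 1 → μ ∈ Set.Ioo (0 : ℝ) 1 → y ≠ μ →
      0 < Real.log (1 + (y - μ) ^ 2 / (y * (1 - y)))) ∧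
    (∀ μ : ℝ, μ ∈ Set.Ioo (0 : ℝ) 1 →
      iteratedDeriv 2
        (fun y : ℝ => Real.log (1 + (y - μ) ^ 2 / (y * (1 - y)))) μ
        = 2 / (μ * (1 - μ)) ∧
      iteratedDeriv 3
        (fun y : ℝ => Real.log (1 + (y - μ) ^ 2 / (y * (1 - y)))) μ
        = 6 * (2 * μ - 1) / (μ * (1 - μ)) ^ 2) := by
  refine ⟨?_, ?_, fun μ hμ => main_calc μ hμ⟩
  · intro y hy
    simp
  · intro y μ hy hμ hne
    apply Real.log_pos
    have h1 : 0 < y * (1 - y) := mul_pos hy.1 (by linarith [hy.2])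
    have h2 : 0 < (y - μ) ^ 2 := by
      have := sub_ne_zero.mpr hne
      positivity
    linarith [div_pos h2 h1]
end

section
/- Let d : Ω × Ω → ℝ be a C³ unit deviance with d(t,t)=0 and ∂_y d(t;t) = 0 for all t, and let V(t) = 2/∂²_{yy} d(t;t) > 0 be continuous at μ₀ ∈ Ω. Fix μ ∈ ℝ and suppose x : (0,∞) → ℝ satisfies σ(x(σ)−μ)³ → β ∈ [0,∞) and σ²(x(σ)−μ)⁴ → 0 as σ → 0. Then the quantity (x(σ)−μ)²/(2V(μ₀)) − (2σ²)⁻¹ d(μ₀+σx(σ); μ₀+σμ) converges to −(β/12)·∂³_{yyy} d(μ₀;μ₀) as σ → 0. -/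
open Filter Topology

open Set

private lemma iterW' {f : ℝ → ℝ} (hf : ContDiff ℝ 3 f) {s : Set ℝ} (hs : UniqueDiffOn ℝ s)
    {x : ℝ} (hx : x ∈ s) {m : ℕ} (hm : (m : WithTop ℕ∞) ≤ 3) :
    iteratedDerivWithin m f s x = iteratedDeriv m f x := by
  rw [iteratedDerivWithin_eq_iteratedFDerivWithin, iteratedDeriv_eq_iteratedFDeriv]
  congr 1
  have h := (contDiff_iff_ftaylorSeries.mp hf).hasFTaylorSeriesUpToOn s
  exact (h.eq_iteratedFDerivWithin_of_uniqueDiffOn (by exact_mod_cast hm) hs hx).symm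

private lemma iterDiff' {f : ℝ → ℝ} (hf : ContDiff ℝ 3 f) {m : ℕ}
    (hm : (m : WithTop ℕ∞) + 1 ≤ 3) :
    Differentiable ℝ (iteratedDeriv m f) := by
  rw [iteratedDeriv_eq_equiv_comp]
  refine (LinearIsometryEquiv.differentiable _).comp
    ((hf.iteratedFDeriv_right ?_).differentiable one_ne_zero)
  rw [add_comm]; exact_mod_cast hm

private lemma taylor2_lt' {f : ℝ → ℝ} (hf : ContDiff ℝ 3 f) {a b : ℝ} (hab : a < b) :
    ∃ ξ ∈ Set.Icc a b,
      f b = f a + deriv f a * (b - a) + iteratedDeriv 2 f a * (b - a) ^ 2 / 2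
        + iteratedDeriv 3 f ξ * (b - a) ^ 3 / 6 := by
  have hu : UniqueDiffOn ℝ (Icc a b) := uniqueDiffOn_Icc hab
  have ha : a ∈ Icc a b := ⟨le_rfl, hab.le⟩
  have hcd : ContDiffOn ℝ 2 f (Icc a b) := (hf.of_le (by norm_num)).contDiffOn
  have hdiff : DifferentiableOn ℝ (iteratedDerivWithin 2 f (Icc a b)) (Ioo a b) := by
    refine ((iterDiff' hf (m := 2) (by norm_num)).differentiableOn (s := Ioo a b)).congr ?_
    intro z hz
    exact iterW' hf hu (Ioo_subset_Icc_self hz) (by norm_num)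
  obtain ⟨ξ, hξ, h⟩ := taylor_mean_remainder_lagrange hab.ne
    (by rwa [uIcc_of_le hab.le]) (by rwa [uIcc_of_le hab.le, uIoo_of_le hab.le])
  rw [uIcc_of_le hab.le] at h
  rw [uIoo_of_le hab.le] at hξ
  refine ⟨ξ, Ioo_subset_Icc_self hξ, ?_⟩
  have e3 : iteratedDerivWithin 3 f (Icc a b) ξ = iteratedDeriv 3 f ξ :=
    iterW' hf hu (Ioo_subset_Icc_self hξ) (by norm_num)
  have e1 : iteratedDerivWithin 1 f (Icc a b) a = deriv f a := by
    rw [iterW' hf hu ha (by norm_num), iteratedDeriv_one]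
  have e2 : iteratedDerivWithin 2 f (Icc a b) a = iteratedDeriv 2 f a :=
    iterW' hf hu ha (by norm_num)
  have ht : taylorWithinEval f 2 (Icc a b) a b
      = f a + deriv f a * (b - a) + iteratedDeriv 2 f a * (b - a) ^ 2 / 2 := by
    rw [show (2:ℕ) = 1 + 1 from rfl, taylorWithinEval_succ, taylorWithinEval_succ,
      taylor_within_zero_eval, e1, e2]
    norm_num
    ring
  rw [ht, e3] at h
  norm_num [Nat.factorial] at h
  linarith [h]

private lemma taylor2' {f : ℝ → ℝ} (hf : ContDiff ℝ 3 f) (a b : ℝ) :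
    ∃ ξ ∈ Set.Icc (min a b) (max a b),
      f b = f a + deriv f a * (b - a) + iteratedDeriv 2 f a * (b - a) ^ 2 / 2
        + iteratedDeriv 3 f ξ * (b - a) ^ 3 / 6 := by
  rcases lt_trichotomy a b with hab | rfl | hab
  · obtain ⟨ξ, hξ, h⟩ := taylor2_lt' hf hab
    exact ⟨ξ, by rwa [min_eq_left hab.le, max_eq_right hab.le], h⟩
  · exact ⟨a, by simp, by simp⟩
  · set g : ℝ → ℝ := fun z => f (-z) with hg
    have hgc : ContDiff ℝ 3 g := hf.comp (contDiff_id.neg)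
    obtain ⟨η, hη, h⟩ := taylor2_lt' hgc (a := -a) (b := -b) (by linarith)
    refine ⟨-η, ?_, ?_⟩
    · rw [min_eq_right hab.le, max_eq_left hab.le]
      constructor <;> [linarith [hη.2]; linarith [hη.1]]
    · have d0 : g (-b) = f b := by simp [hg]
      have d0' : g (-a) = f a := by simp [hg]
      have d1 : deriv g (-a) = -deriv f a := by
        simpa using deriv_comp_neg f (-a)
      have d2 : iteratedDeriv 2 g (-a) = iteratedDeriv 2 f a := by
        simpa using iteratedDeriv_comp_neg 2 f (-a)
      have d3 : iteratedDeriv 3 g η = -iteratedDeriv 3 f (-η) := by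
        have := iteratedDeriv_comp_neg 3 f η; rw [hg]; rw [this]; norm_num
      rw [d0, d0', d1, d2, d3] at h
      rw [h]; ring

private lemma cube_tendsto_zero' {α : Type*} {l : Filter α} {u : α → ℝ}
    (h : Tendsto (fun s => (u s) ^ 3) l (𝓝 0)) : Tendsto u l (𝓝 0) := by
  rw [Metric.tendsto_nhds] at h ⊢
  intro ε hε
  filter_upwards [h (ε ^ 3) (by positivity)] with s hs
  rw [Real.dist_eq, sub_zero] at hs ⊢
  by_contra hcon
  push_neg at hcon
  have : ε ^ 3 ≤ |u s| ^ 3 := by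
    apply pow_le_pow_left₀ hε.le hcon
  rw [← abs_pow] at this
  linarith


/-- Exponent comparison underlying Theorem 2: for a C³ unit
deviance with `d(t,t)=0`, `∂_y d(t;t)=0`, `∂²_{yy} d(t;t) > 0`, with
`V(t) = 2/∂²_{yy} d(t;t)` continuous at `μ₀`, if `σ(x(σ)−μ)³ → β ∈ [0,∞)` and
`σ²(x(σ)−μ)⁴ → 0` as `σ → 0⁺`, then
`(x(σ)−μ)²/(2V(μ₀)) − (2σ²)⁻¹ d(μ₀+σx(σ); μ₀+σμ) → −(β/12)·∂³_{yyy} d(μ₀;μ₀)`. -/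
theorem taylor_limit_third_order
    (Ω : Set ℝ) (hΩopen : IsOpen Ω) (μ₀ : ℝ) (hμ₀ : μ₀ ∈ Ω)
    (d : ℝ → ℝ → ℝ)
    (hC3 : ContDiffOn ℝ 3 (fun p : ℝ × ℝ => d p.1 p.2) (Ω ×ˢ Ω))
    (hdiag : ∀ t ∈ Ω, d t t = 0)
    (hd1 : ∀ t ∈ Ω, deriv (fun y => d y t) t = 0)
    (hd2pos : ∀ t ∈ Ω, 0 < iteratedDeriv 2 (fun y => d y t) t)
    (hVcont : ContinuousAt (fun t => 2 / iteratedDeriv 2 (fun y => d y t) t) μ₀)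
    (μ : ℝ) (x : ℝ → ℝ)
    (hmem : ∀ᶠ σ in 𝓝[>] (0 : ℝ),
      μ₀ + σ * μ ∈ Ω ∧ μ₀ + σ * x σ ∈ Ω)
    (β : ℝ) (hβ : 0 ≤ β)
    (hx3 : Tendsto (fun σ => σ * (x σ - μ) ^ 3) (𝓝[>] (0 : ℝ)) (𝓝 β))
    (hx4 : Tendsto (fun σ => σ ^ 2 * (x σ - μ) ^ 4) (𝓝[>] (0 : ℝ)) (𝓝 0)) :
    Tendsto
      (fun σ =>
        (x σ - μ) ^ 2 / (2 * (2 / iteratedDeriv 2 (fun y => d y μ₀) μ₀))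
          - d (μ₀ + σ * x σ) (μ₀ + σ * μ) / (2 * σ ^ 2))
      (𝓝[>] (0 : ℝ))
      (𝓝 (-(β / 12) * iteratedDeriv 3 (fun y => d y μ₀) μ₀)) := by
  classical
  -- geometry: a ball around the diagonal point inside Ω ×ˢ Ω
  have hUopen : IsOpen (Ω ×ˢ Ω) := hΩopen.prod hΩopen
  have hc : ((μ₀, μ₀) : ℝ × ℝ) ∈ Ω ×ˢ Ω := ⟨hμ₀, hμ₀⟩
  obtain ⟨ε, hε, hball⟩ := Metric.isOpen_iff.mp hUopen _ hc
  set ρ := ε / 3 with hρdef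
  have hρ : 0 < ρ := by positivity
  have hsub : Metric.closedBall ((μ₀, μ₀) : ℝ × ℝ) (2 * ρ) ⊆ Ω ×ˢ Ω := by
    intro p hp
    apply hball
    have h1 : dist p ((μ₀, μ₀) : ℝ × ℝ) ≤ 2 * ρ := hp
    have h2 : (2:ℝ) * ρ < ε := by rw [hρdef]; linarith
    exact Metric.mem_ball.mpr (by linarith)
  -- bump function and global extension G of d
  set χ : ContDiffBump ((μ₀, μ₀) : ℝ × ℝ) := ⟨ρ, 2 * ρ, hρ, by linarith⟩ with hχ
  set G : ℝ × ℝ → ℝ := fun p => χ p * d p.1 p.2 with hGdef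
  have hGsmooth : ContDiff ℝ 3 G := by
    rw [contDiff_iff_contDiffAt]
    intro p
    by_cases hp : p ∈ Metric.closedBall ((μ₀, μ₀) : ℝ × ℝ) (2 * ρ)
    · exact (χ.contDiff (n := 3)).contDiffAt.mul
        ((hC3.contDiffAt (hUopen.mem_nhds (hsub hp))))
    · have hopen : IsOpen (Metric.closedBall ((μ₀, μ₀) : ℝ × ℝ) (2 * ρ))ᶜ :=
        Metric.isClosed_closedBall.isOpen_compl
      have hev : ∀ᶠ q in 𝓝 p, G q = 0 := by
        filter_upwards [hopen.mem_nhds hp] with q hq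
        have hq0 : χ q = 0 := by
          apply χ.zero_of_le_dist
          simp only [Set.mem_compl_iff, Metric.mem_closedBall, not_le] at hq
          exact le_of_lt hq
        simp [hGdef, hq0]
      exact (contDiffAt_const (c := (0:ℝ))).congr_of_eventuallyEq hev
  have hGeq : ∀ p ∈ Metric.ball ((μ₀, μ₀) : ℝ × ℝ) ρ, G p = d p.1 p.2 := by
    intro p hp
    have h1 : χ p = 1 := χ.one_of_mem_closedBall (Metric.ball_subset_closedBall hp)
    simp [hGdef, h1]
  -- directional derivative functions
  set v : ℝ × ℝ := (1, 0) with hv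
  set D1 : ℝ × ℝ → ℝ := fun p => fderiv ℝ G p v with hD1
  have hD1smooth : ContDiff ℝ 2 D1 := by
    have h := hGsmooth.fderiv_right (m := 2) (by norm_num)
    exact ((ContinuousLinearMap.apply ℝ ℝ v).contDiff).comp h
  set D2 : ℝ × ℝ → ℝ := fun p => fderiv ℝ D1 p v with hD2
  have hD2smooth : ContDiff ℝ 1 D2 := by
    have h := hD1smooth.fderiv_right (m := 1) (by norm_num)
    exact ((ContinuousLinearMap.apply ℝ ℝ v).contDiff).comp h
  set D3 : ℝ × ℝ → ℝ := fun p => fderiv ℝ D2 p v with hD3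
  have hD3cont : Continuous D3 := by
    have h := (hD2smooth.fderiv_right (m := 0) (by norm_num)).continuous
    exact ((ContinuousLinearMap.apply ℝ ℝ v).continuous).comp h
  have hline : ∀ t y : ℝ, HasDerivAt (fun y' : ℝ => ((y', t) : ℝ × ℝ)) v y := by
    intro t y
    simpa [hv] using ((hasDerivAt_id y).prodMk (hasDerivAt_const y t))
  have key : ∀ (H : ℝ × ℝ → ℝ), Differentiable ℝ H →
      ∀ t : ℝ, deriv (fun y => H (y, t)) = fun y => fderiv ℝ H (y, t) v := by
    intro H hH t
    funext y
    exact (((hH (y, t)).hasFDerivAt).comp_hasDerivAt y (hline t y)).deriv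
  have h1 : ∀ t : ℝ, deriv (fun y => G (y, t)) = fun y => D1 (y, t) :=
    key G (hGsmooth.differentiable (by norm_num))
  have h2 : ∀ t : ℝ, deriv (fun y => D1 (y, t)) = fun y => D2 (y, t) :=
    key D1 (hD1smooth.differentiable (by norm_num))
  have h3 : ∀ t : ℝ, deriv (fun y => D2 (y, t)) = fun y => D3 (y, t) :=
    key D2 (hD2smooth.differentiable (by norm_num))
  have hiter2 : ∀ t : ℝ, iteratedDeriv 2 (fun y => G (y, t)) = fun y => D2 (y, t) := by
    intro t
    rw [show (2:ℕ) = 1 + 1 from rfl, iteratedDeriv_succ, iteratedDeriv_one, h1, h2]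
  have hiter3 : ∀ t : ℝ, iteratedDeriv 3 (fun y => G (y, t)) = fun y => D3 (y, t) := by
    intro t
    rw [show (3:ℕ) = 2 + 1 from rfl, iteratedDeriv_succ, hiter2, h3]
  have hslice : ∀ t : ℝ, ContDiff ℝ 3 (fun y => G (y, t)) :=
    fun t => hGsmooth.comp (contDiff_id.prodMk contDiff_const)
  -- slices of d agree with slices of G near the center
  have hslice_eq : ∀ t y : ℝ, dist t μ₀ < ρ → dist y μ₀ < ρ →
      (fun y' => d y' t) =ᶠ[𝓝 y] (fun y' => G (y', t)) := by
    intro t y ht hy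
    filter_upwards [Metric.isOpen_ball.mem_nhds (show y ∈ Metric.ball μ₀ ρ from hy)]
      with y' hy'
    exact (hGeq (y', t) (by
      rw [Metric.mem_ball, Prod.dist_eq]
      exact max_lt hy' ht)).symm
  have hk_eq : ∀ (k : ℕ) (t y : ℝ), dist t μ₀ < ρ → dist y μ₀ < ρ →
      iteratedDeriv k (fun y' => d y' t) y = iteratedDeriv k (fun y' => G (y', t)) y :=
    fun k t y ht hy => (hslice_eq t y ht hy).iteratedDeriv_eq k
  have hderiv_eq : ∀ t y : ℝ, dist t μ₀ < ρ → dist y μ₀ < ρ →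
      deriv (fun y' => d y' t) y = deriv (fun y' => G (y', t)) y :=
    fun t y ht hy => (hslice_eq t y ht hy).deriv_eq
  have hρself : dist μ₀ μ₀ < ρ := by simp [hρ]
  -- identify the constants in the statement
  have hK2 : iteratedDeriv 2 (fun y => d y μ₀) μ₀ = D2 (μ₀, μ₀) := by
    rw [hk_eq 2 μ₀ μ₀ hρself hρself, hiter2]
  have hK3 : iteratedDeriv 3 (fun y => d y μ₀) μ₀ = D3 (μ₀, μ₀) := by
    rw [hk_eq 3 μ₀ μ₀ hρself hρself, hiter3]
  have hK2pos : 0 < D2 (μ₀, μ₀) := hK2 ▸ hd2pos μ₀ hμ₀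
  -- basic limits
  have hσ0 : Tendsto (fun σ : ℝ => σ) (𝓝[>] (0:ℝ)) (𝓝 0) :=
    tendsto_id.mono_right nhdsWithin_le_nhds
  have hσ2 : Tendsto (fun σ : ℝ => σ ^ 2) (𝓝[>] (0:ℝ)) (𝓝 0) := by
    have := hσ0.mul hσ0
    simpa [pow_two] using this
  have hux : Tendsto (fun σ => σ * (x σ - μ)) (𝓝[>] (0:ℝ)) (𝓝 0) := by
    apply cube_tendsto_zero'
    have := hσ2.mul hx3
    rw [zero_mul] at this
    refine this.congr (fun σ => by ring)
  have ht : Tendsto (fun σ : ℝ => μ₀ + σ * μ) (𝓝[>] (0:ℝ)) (𝓝 μ₀) := by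
    have := (hσ0.mul_const μ).const_add μ₀
    simpa using this
  have hy : Tendsto (fun σ : ℝ => μ₀ + σ * x σ) (𝓝[>] (0:ℝ)) (𝓝 μ₀) := by
    have h' := ht.add hux
    rw [add_zero] at h'
    exact h'.congr fun σ => by ring
  have hsx2 : Tendsto (fun σ => σ * (x σ - μ) ^ 2) (𝓝[>] (0:ℝ)) (𝓝 0) := by
    have hs : Tendsto (fun σ => Real.sqrt (σ ^ 2 * (x σ - μ) ^ 4)) (𝓝[>] (0:ℝ)) (𝓝 0) := by
      have := (Real.continuous_sqrt.tendsto 0).comp hx4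
      simpa [Function.comp_def] using this
    refine hs.congr' ?_
    filter_upwards [self_mem_nhdsWithin] with σ (hσ : (0:ℝ) < σ)
    have hnn : 0 ≤ σ * (x σ - μ) ^ 2 := by positivity
    rw [show σ ^ 2 * (x σ - μ) ^ 4 = (σ * (x σ - μ) ^ 2) ^ 2 by ring, Real.sqrt_sq hnn]
  -- the diagonal second-derivative function and its difference quotient
  set γ : ℝ → ℝ := fun s => D2 (μ₀ + s * μ, μ₀ + s * μ) with hγdef
  have hγdiff : DifferentiableAt ℝ γ 0 := by
    have hin : Differentiable ℝ (fun s : ℝ => ((μ₀ + s * μ, μ₀ + s * μ) : ℝ × ℝ)) := by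
      apply Differentiable.prodMk <;>
        exact (differentiable_id.mul_const μ).const_add μ₀
    exact DifferentiableAt.comp 0 ((hD2smooth.differentiable one_ne_zero) _) (hin 0)
  have hγ0 : γ 0 = D2 (μ₀, μ₀) := by simp [hγdef]
  have hslope : Tendsto (fun σ => (γ σ - γ 0) / σ) (𝓝[>] (0:ℝ)) (𝓝 (deriv γ 0)) := by
    have h := hγdiff.hasDerivAt
    rw [hasDerivAt_iff_tendsto_slope] at h
    have hmono : (𝓝[>] (0:ℝ)) ≤ 𝓝[≠] (0:ℝ) :=
      nhdsWithin_mono 0 (fun z hz => ne_of_gt hz)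
    have := h.mono_left hmono
    refine this.congr (fun σ => ?_)
    rw [slope_def_field, sub_zero]
  -- Taylor expansion with intermediate point, eventually
  set P : ℝ → ℝ → Prop := fun σ ξ =>
    ξ ∈ Icc (min (μ₀ + σ * μ) (μ₀ + σ * x σ)) (max (μ₀ + σ * μ) (μ₀ + σ * x σ)) ∧
      d (μ₀ + σ * x σ) (μ₀ + σ * μ)
        = γ σ * (σ * (x σ - μ)) ^ 2 / 2 + D3 (ξ, μ₀ + σ * μ) * (σ * (x σ - μ)) ^ 3 / 6
    with hPdef
  have hEx : ∀ᶠ σ in 𝓝[>] (0:ℝ), ∃ ξ, P σ ξ := by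
    filter_upwards [hmem, ht (Metric.ball_mem_nhds μ₀ hρ),
      hy (Metric.ball_mem_nhds μ₀ hρ)] with σ hΩm htσ hyσ
    have htd : dist (μ₀ + σ * μ) μ₀ < ρ := htσ
    have hyd : dist (μ₀ + σ * x σ) μ₀ < ρ := hyσ
    obtain ⟨ξ, hξmem, hξeq⟩ := taylor2' (hslice (μ₀ + σ * μ)) (μ₀ + σ * μ) (μ₀ + σ * x σ)
    refine ⟨ξ, hξmem, ?_⟩
    -- rewrite the Taylor identity for G into one for d
    have e0 : G (μ₀ + σ * μ, μ₀ + σ * μ) = 0 := by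
      rw [hGeq _ (by rw [Metric.mem_ball, Prod.dist_eq]; exact max_lt htd htd)]
      exact hdiag _ hΩm.1
    have e1 : deriv (fun y => G (y, μ₀ + σ * μ)) (μ₀ + σ * μ) = 0 := by
      rw [← hderiv_eq _ _ htd htd]
      exact hd1 _ hΩm.1
    have e2 : iteratedDeriv 2 (fun y => G (y, μ₀ + σ * μ)) (μ₀ + σ * μ) = γ σ := by
      rw [hiter2]
    have e3 : iteratedDeriv 3 (fun y => G (y, μ₀ + σ * μ)) ξ = D3 (ξ, μ₀ + σ * μ) := by
      rw [hiter3]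
    have e4 : G (μ₀ + σ * x σ, μ₀ + σ * μ) = d (μ₀ + σ * x σ) (μ₀ + σ * μ) :=
      hGeq _ (by rw [Metric.mem_ball, Prod.dist_eq]; exact max_lt hyd htd)
    rw [e0, e1, e2, e3, e4] at hξeq
    rw [hξeq]
    have hyt : μ₀ + σ * x σ - (μ₀ + σ * μ) = σ * (x σ - μ) := by ring
    rw [hyt]
    ring
  set Ξ : ℝ → ℝ := fun σ => if h : ∃ ξ, P σ ξ then h.choose else μ₀ with hΞdef
  have hΞP : ∀ᶠ σ in 𝓝[>] (0:ℝ), P σ (Ξ σ) := by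
    filter_upwards [hEx] with σ hσ
    simp only [hΞdef, dif_pos hσ]
    exact hσ.choose_spec
  -- Ξ tends to μ₀
  have hmin : Tendsto (fun σ => min (μ₀ + σ * μ) (μ₀ + σ * x σ)) (𝓝[>] (0:ℝ)) (𝓝 μ₀) := by
    have := ht.min hy; simpa using this
  have hmax : Tendsto (fun σ => max (μ₀ + σ * μ) (μ₀ + σ * x σ)) (𝓝[>] (0:ℝ)) (𝓝 μ₀) := by
    have := ht.max hy; simpa using this
  have hΞtend : Tendsto Ξ (𝓝[>] (0:ℝ)) (𝓝 μ₀) := by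
    refine tendsto_of_tendsto_of_tendsto_of_le_of_le' hmin hmax ?_ ?_
    · filter_upwards [hΞP] with σ hσ; exact hσ.1.1
    · filter_upwards [hΞP] with σ hσ; exact hσ.1.2
  have hD3lim : Tendsto (fun σ => D3 (Ξ σ, μ₀ + σ * μ)) (𝓝[>] (0:ℝ)) (𝓝 (D3 (μ₀, μ₀))) := by
    have hpair : Tendsto (fun σ => ((Ξ σ, μ₀ + σ * μ) : ℝ × ℝ)) (𝓝[>] (0:ℝ)) (𝓝 (μ₀, μ₀)) :=
      hΞtend.prodMk_nhds ht
    exact (hD3cont.tendsto _).comp hpair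
  -- the auxiliary expression and its limit
  have hA : Tendsto
      (fun σ => -(σ * (x σ - μ) ^ 2 * ((γ σ - γ 0) / σ)) / 4
        - D3 (Ξ σ, μ₀ + σ * μ) * (σ * (x σ - μ) ^ 3) / 12) (𝓝[>] (0:ℝ))
      (𝓝 (-(0 * deriv γ 0) / 4 - D3 (μ₀, μ₀) * β / 12)) := by
    exact (((hsx2.mul hslope).neg).div_const 4).sub ((hD3lim.mul hx3).div_const 12)
  rw [hK2, hK3]
  have hLeq : -(0 * deriv γ 0) / 4 - D3 (μ₀, μ₀) * β / 12 = -(β / 12) * D3 (μ₀, μ₀) := by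
    ring
  rw [← hLeq]
  refine hA.congr' ?_
  filter_upwards [hΞP, self_mem_nhdsWithin] with σ hP (hσpos : (0:ℝ) < σ)
  have hσne : σ ≠ 0 := ne_of_gt hσpos
  have hK2ne : D2 (μ₀, μ₀) ≠ 0 := ne_of_gt hK2pos
  rw [hγ0]
  rw [hP.2]
  field_simp
  ring
end
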